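/- Let D be a finite distributive lattice with set of join-irreducibles P = {p₁,…,p_m}, and let M be a lattice with an independent (over o) family (b₁,…,b_m) of elements ≥ o such that M is modular. Then the map f : D → M defined by f(x) = ⋁{bᵢ : pᵢ ≤ x} (empty join = o) is a lattice homomorphism. -/

import Mathlib

open Finset

section Aux

variable {ι M : Type*} [DecidableEq ι] [Lattice M]
  (o : M) (b : ι → M)

def auxF (S : Finset ι) : M := S.fold ((· ⊔ ·) : M → M → M) o b

local notation "F" => auxF o b

lemma aux_fold_empty : F (∅ : Finset ι) = o := Finset.fold_empty

lemma aux_fold_insert (a : ι) (S : Finset ι) :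
    F (insert a S) = b a ⊔ F S :=
  Finset.fold_insert_idem

lemma aux_le_fold (hob : ∀ i, o ≤ b i) (S : Finset ι) : o ≤ F S := by
  induction S using Finset.induction_on with
  | empty => exact (aux_fold_empty o b).ge
  | insert _ _ h ih => rw [aux_fold_insert]; exact le_trans ih le_sup_right

lemma aux_fold_union (hob : ∀ i, o ≤ b i) (S T : Finset ι) :
    F (S ∪ T) = F S ⊔ F T := by
  induction S using Finset.induction_on with
  | empty =>
      rw [Finset.empty_union, aux_fold_empty]
      exact (sup_of_le_right (aux_le_fold o b hob T)).symm
  | @insert a S _ ih =>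
      rw [insert_union, aux_fold_insert, aux_fold_insert, ih, sup_assoc]

lemma aux_fold_mono (hob : ∀ i, o ≤ b i) {S T : Finset ι} (h : S ⊆ T) :
    F S ≤ F T := by
  rw [← Finset.union_eq_right.2 h, aux_fold_union o b hob]
  exact le_sup_left

lemma aux_disjoint [IsModularLattice M] (hob : ∀ i, o ≤ b i)
    (hind : ∀ (k : ι) (S : Finset ι), k ∉ S → b k ⊓ F S = o)
    (S T : Finset ι) (hd : Disjoint S T) : F S ⊓ F T = o := by
  induction S using Finset.induction_on with
  | empty =>
      rw [aux_fold_empty]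
      exact inf_of_le_left (aux_le_fold o b hob T)
  | @insert k S hk ih =>
      have hd' : Disjoint S T := (Finset.disjoint_insert_left.1 hd).2
      have hkT : k ∉ T := (Finset.disjoint_insert_left.1 hd).1
      have hkST : k ∉ S ∪ T := by simp [hk, hkT]
      have key : (b k ⊔ F S) ⊓ (F S ⊔ F T) = F S := by
        rw [sup_comm (b k), sup_inf_assoc_of_le _ le_sup_left,
          ← aux_fold_union o b hob, hind k (S ∪ T) hkST,
          sup_of_le_left (aux_le_fold o b hob S)]
      rw [aux_fold_insert]
      refine le_antisymm ?_ (le_inf (le_trans (aux_le_fold o b hob S) le_sup_right)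
        (aux_le_fold o b hob T))
      calc (b k ⊔ F S) ⊓ F T
          ≤ ((b k ⊔ F S) ⊓ (F S ⊔ F T)) ⊓ F T :=
            le_inf (inf_le_inf_left _ le_sup_right) inf_le_right
        _ = F S ⊓ F T := by rw [key]
        _ = o := ih hd'

lemma aux_fold_inter [IsModularLattice M] (hob : ∀ i, o ≤ b i)
    (hind : ∀ (k : ι) (S : Finset ι), k ∉ S → b k ⊓ F S = o)
    (S T : Finset ι) : F S ⊓ F T = F (S ∩ T) := by
  have hS : S = (S ∩ T) ∪ (S \ T) := by
    rw [Finset.union_comm, Finset.sdiff_union_inter]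
  have hdisj : Disjoint (S \ T) T := Finset.sdiff_disjoint
  calc F S ⊓ F T = (F (S ∩ T) ⊔ F (S \ T)) ⊓ F T := by
        conv_lhs => rw [hS, aux_fold_union o b hob]
    _ = F (S ∩ T) ⊔ (F (S \ T) ⊓ F T) :=
        sup_inf_assoc_of_le _ (aux_fold_mono o b hob Finset.inter_subset_right)
    _ = F (S ∩ T) := by
        rw [aux_disjoint o b hob hind _ _ hdisj,
          sup_of_le_left (aux_le_fold o b hob _)]

end Aux

open Finset in
/-- Let `D` be a finite distributive lattice with join-irreducible elements
`p₁, …, p_m`, and let `M` be a modular lattice with a family `(b₁, …, b_m)` of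
elements `≥ o`, indexed by the join-irreducibles of `D`, which is independent
over `o`.  Then `f : D → M`, `f x = ⋁ {bᵢ : pᵢ ≤ x}` (empty join `= o`), is a
lattice homomorphism. -/
theorem join_of_independent_family_is_hom
    {D : Type*} [DistribLattice D] [Fintype D]
    [DecidablePred (SupIrred : D → Prop)]
    [DecidableRel ((· ≤ ·) : D → D → Prop)]
    {M : Type*} [Lattice M] [IsModularLattice M]
    (o : M) (b : {p : D // SupIrred p} → M)
    (hob : ∀ i, o ≤ b i)
    -- independence of `(bᵢ)` over `o`:
    (hind : ∀ (k : {p : D // SupIrred p}) (S : Finset {p : D // SupIrred p}),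
      k ∉ S → b k ⊓ S.fold ((· ⊔ ·) : M → M → M) o b = o) :
    ∀ x y : D,
      ((univ.filter fun p : {p : D // SupIrred p} => (p : D) ≤ x ⊔ y).fold ((· ⊔ ·) : M → M → M) o b =
        (univ.filter fun p : {p : D // SupIrred p} => (p : D) ≤ x).fold ((· ⊔ ·) : M → M → M) o b ⊔
        (univ.filter fun p : {p : D // SupIrred p} => (p : D) ≤ y).fold ((· ⊔ ·) : M → M → M) o b) ∧
      ((univ.filter fun p : {p : D // SupIrred p} => (p : D) ≤ x ⊓ y).fold ((· ⊔ ·) : M → M → M) o b =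
        (univ.filter fun p : {p : D // SupIrred p} => (p : D) ≤ x).fold ((· ⊔ ·) : M → M → M) o b ⊓
        (univ.filter fun p : {p : D // SupIrred p} => (p : D) ≤ y).fold ((· ⊔ ·) : M → M → M) o b) := by
  intro x y
  letI : DecidableEq D := fun a c => decidable_of_iff (a ≤ c ∧ c ≤ a) le_antisymm_iff.symm
  constructor
  · have hset : (univ.filter fun p : {p : D // SupIrred p} => (p : D) ≤ x ⊔ y) =
        (univ.filter fun p : {p : D // SupIrred p} => (p : D) ≤ x) ∪
        (univ.filter fun p : {p : D // SupIrred p} => (p : D) ≤ y) := by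
      ext p
      simp only [Finset.mem_filter, Finset.mem_union, Finset.mem_univ, true_and]
      exact p.2.supPrime.le_sup
    rw [hset]; exact aux_fold_union o b hob _ _
  · have hset : (univ.filter fun p : {p : D // SupIrred p} => (p : D) ≤ x ⊓ y) =
        (univ.filter fun p : {p : D // SupIrred p} => (p : D) ≤ x) ∩
        (univ.filter fun p : {p : D // SupIrred p} => (p : D) ≤ y) := by
      ext p
      simp [le_inf_iff]
    rw [hset]; exact (aux_fold_inter o b hob hind _ _).symm
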